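/- Let G be a connected 2-digraph and S a split-set with split-components H^1,…,H^n. Then |V_sat(G)| = Σ_j |V_sat(H^j)| + |S|, |V_entry(G)| = Σ_j |V_entry(H^j)| − |S|, and |V_exit(G)| = Σ_j |V_exit(H^j)| − |S|. -/

import Mathlib

/-- In-degree of `v` in arc set `B`: number of arcs ending at `v`. -/
def inDeg {V : Type*} [DecidableEq V] (B : Finset (V × V)) (v : V) : ℕ :=
  (B.filter fun a => a.2 = v).card

/-- Out-degree of `v` in arc set `B`: number of arcs starting at `v`. -/
def outDeg {V : Type*} [DecidableEq V] (B : Finset (V × V)) (v : V) : ℕ :=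
  (B.filter fun a => a.1 = v).card

/-- A 2-digraph: every vertex has (in,out)-degrees (2,0), (0,2) or (2,2). -/
def TwoDigraph {V : Type*} [DecidableEq V] (A : Finset (V × V)) : Prop :=
  ∀ v : V, (inDeg A v = 2 ∧ outDeg A v = 0) ∨ (inDeg A v = 0 ∧ outDeg A v = 2) ∨
    (inDeg A v = 2 ∧ outDeg A v = 2)

/-- Vertices of the graph obtained from `(V, A)` by splitting the vertices of `S`:
`(v, false)` is `v` itself (or `v^out` when `v ∈ S`), and `(v, true)` is `v^in`
for `v ∈ S`. -/
def splitVerts {V : Type*} [Fintype V] [DecidableEq V] (S : Finset V) :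
    Finset (V × Bool) :=
  (Finset.univ.image fun v => (v, false)) ∪ (S.image fun v => (v, true))

/-- Arcs of the graph obtained from `(V, A)` by splitting the vertices of `S`:
an arc `(u, w)` ends at `w^in = (w, true)` if `w ∈ S`, else at `(w, false)`;
it starts at `(u, false)` (which is `u^out` when `u ∈ S`). -/
def splitArcs {V : Type*} [Fintype V] [DecidableEq V] (A : Finset (V × V)) (S : Finset V) :
    Finset ((V × Bool) × (V × Bool)) :=
  A.image fun a => ((a.1, false), (a.2, if a.2 ∈ S then true else false))

/-- Reachability in the underlying undirected graph of the split graph. -/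
def splitReach {V : Type*} [Fintype V] [DecidableEq V] (A : Finset (V × V)) (S : Finset V) :
    V × Bool → V × Bool → Prop :=
  Relation.ReflTransGen (fun x y => (x, y) ∈ splitArcs A S ∨ (y, x) ∈ splitArcs A S)

/-- The graph obtained by splitting `S` is connected (as an undirected graph). -/
def SplitConnected {V : Type*} [Fintype V] [DecidableEq V] (A : Finset (V × V))
    (S : Finset V) : Prop :=
  ∀ x ∈ splitVerts (V := V) S, ∀ y ∈ splitVerts (V := V) S, splitReach A S x y

section Aux
set_option linter.unusedSectionVars false
variable {V : Type*} [Fintype V] [DecidableEq V] (A : Finset (V × V)) (S : Finset V)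

lemma f_inj : Function.Injective
    (fun a : V × V => ((a.1, (false : Bool)), (a.2, if a.2 ∈ S then true else false))) := by
  intro a b h
  simp only [Prod.mk.injEq] at h
  exact Prod.ext h.1.1 h.2.1

lemma outDeg_split (v : V) (b : Bool) :
    outDeg (splitArcs A S) (v, b) = if b = false then outDeg A v else 0 := by
  unfold outDeg splitArcs
  rw [Finset.filter_image, Finset.card_image_of_injective _ (f_inj S)]
  cases b with
  | false => simp [Prod.ext_iff]
  | true => simp [Prod.ext_iff]

lemma inDeg_split_false (v : V) :
    inDeg (splitArcs A S) (v, false) = if v ∈ S then 0 else inDeg A v := by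
  unfold inDeg splitArcs
  rw [Finset.filter_image, Finset.card_image_of_injective _ (f_inj S)]
  simp only [Prod.mk.injEq]
  by_cases hv : v ∈ S
  · simp only [hv, if_true]
    rw [Finset.card_eq_zero, Finset.filter_eq_empty_iff]
    rintro a _ ⟨rfl, h2⟩
    simp [hv] at h2
  · simp only [hv, if_false]
    congr 1
    apply Finset.filter_congr
    intro a _
    constructor
    · rintro ⟨rfl, -⟩; rfl
    · rintro rfl; simp [hv]

lemma inDeg_split_true (v : V) :
    inDeg (splitArcs A S) (v, true) = if v ∈ S then inDeg A v else 0 := by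
  unfold inDeg splitArcs
  rw [Finset.filter_image, Finset.card_image_of_injective _ (f_inj S)]
  simp only [Prod.mk.injEq]
  by_cases hv : v ∈ S
  · simp only [hv, if_true]
    congr 1
    apply Finset.filter_congr
    intro a _
    constructor
    · rintro ⟨rfl, -⟩; rfl
    · rintro rfl; simp [hv]
  · simp only [hv, if_false]
    rw [Finset.card_eq_zero, Finset.filter_eq_empty_iff]
    rintro a _ ⟨rfl, h2⟩
    simp [hv] at h2

lemma mem_splitVerts (v : V) (b : Bool) :
    (v, b) ∈ splitVerts (V := V) S ↔ b = false ∨ (v ∈ S ∧ b = true) := by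
  simp [splitVerts]

end Aux

theorem split_set_degree_counts {V : Type*} [Fintype V] [DecidableEq V]
    (A : Finset (V × V)) (h2 : TwoDigraph A)
    (hconn : SplitConnected A (∅ : Finset V))
    (S : Finset V) (hS : ∀ v ∈ S, inDeg A v = 2 ∧ outDeg A v = 2)
    (hsplit : ¬ SplitConnected A S) :
    (Finset.univ.filter fun v : V => inDeg A v = 2 ∧ outDeg A v = 2).card =
      ((splitVerts (V := V) S).filter fun x =>
        inDeg (splitArcs A S) x = 2 ∧ outDeg (splitArcs A S) x = 2).card + S.card ∧
    (Finset.univ.filter fun v : V => inDeg A v = 0 ∧ outDeg A v = 2).card =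
      ((splitVerts (V := V) S).filter fun x =>
        inDeg (splitArcs A S) x = 0 ∧ outDeg (splitArcs A S) x = 2).card - S.card ∧
    (Finset.univ.filter fun v : V => inDeg A v = 2 ∧ outDeg A v = 0).card =
      ((splitVerts (V := V) S).filter fun x =>
        inDeg (splitArcs A S) x = 2 ∧ outDeg (splitArcs A S) x = 0).card - S.card := by
  classical
  have hinj0 : Function.Injective (fun v : V => (v, false)) := fun a b h => by
    simpa using congrArg Prod.fst h
  have hinj1 : Function.Injective (fun v : V => (v, true)) := fun a b h => by
    simpa using congrArg Prod.fst h
  refine ⟨?_, ?_, ?_⟩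
  · have hsub : S ⊆ Finset.univ.filter fun v : V => inDeg A v = 2 ∧ outDeg A v = 2 := by
      intro v hv; simp [hS v hv]
    have hset : ((splitVerts (V := V) S).filter fun x =>
        inDeg (splitArcs A S) x = 2 ∧ outDeg (splitArcs A S) x = 2)
        = ((Finset.univ.filter fun v : V => inDeg A v = 2 ∧ outDeg A v = 2) \ S).image
            (fun v => (v, false)) := by
      ext ⟨v, b⟩
      cases b <;>
        simp [mem_splitVerts, inDeg_split_false, inDeg_split_true, outDeg_split,
          Prod.ext_iff] <;>
        by_cases hv : v ∈ S <;> simp [hv] <;> tauto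
    rw [hset, Finset.card_image_of_injective _ hinj0, Finset.card_sdiff_of_subset hsub]
    have := Finset.card_le_card hsub
    omega
  · have hdisj : Disjoint (Finset.univ.filter fun v : V => inDeg A v = 0 ∧ outDeg A v = 2) S := by
      rw [Finset.disjoint_left]
      intro v hv hvS
      simp only [Finset.mem_filter] at hv
      have := (hS v hvS).1
      omega
    have hset : ((splitVerts (V := V) S).filter fun x =>
        inDeg (splitArcs A S) x = 0 ∧ outDeg (splitArcs A S) x = 2)
        = ((Finset.univ.filter fun v : V => inDeg A v = 0 ∧ outDeg A v = 2) ∪ S).image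
            (fun v => (v, false)) := by
      ext ⟨v, b⟩
      cases b <;>
        simp [mem_splitVerts, inDeg_split_false, inDeg_split_true, outDeg_split,
          Prod.ext_iff] <;>
        by_cases hv : v ∈ S <;> simp [hv, (fun h => (hS v h).2 : v ∈ S → outDeg A v = 2)] <;> tauto
    rw [hset, Finset.card_image_of_injective _ hinj0, Finset.card_union_of_disjoint hdisj,
      Nat.add_sub_cancel]
  · have hdisj : Disjoint
        ((Finset.univ.filter fun v : V => inDeg A v = 2 ∧ outDeg A v = 0).image
          (fun v => (v, false))) (S.image (fun v => (v, true))) := by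
      rw [Finset.disjoint_left]
      rintro ⟨v, b⟩ h1 h2
      simp only [Finset.mem_image, Prod.mk.injEq] at h1 h2
      obtain ⟨_, _, _, hb1⟩ := h1
      obtain ⟨_, _, _, hb2⟩ := h2
      rw [← hb1] at hb2; simp at hb2
    have hset : ((splitVerts (V := V) S).filter fun x =>
        inDeg (splitArcs A S) x = 2 ∧ outDeg (splitArcs A S) x = 0)
        = ((Finset.univ.filter fun v : V => inDeg A v = 2 ∧ outDeg A v = 0).image
            (fun v => (v, false))) ∪ (S.image (fun v => (v, true))) := by
      ext ⟨v, b⟩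
      cases b <;>
        simp [mem_splitVerts, inDeg_split_false, inDeg_split_true, outDeg_split,
          Prod.ext_iff] <;>
        by_cases hv : v ∈ S <;>
        simp [hv, (fun h => (hS v h).1 : v ∈ S → inDeg A v = 2),
          (fun h => (hS v h).2 : v ∈ S → outDeg A v = 2)] <;> tauto
    rw [hset, Finset.card_union_of_disjoint hdisj,
      Finset.card_image_of_injective _ hinj0, Finset.card_image_of_injective _ hinj1,
      Nat.add_sub_cancel]
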